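/- Let G be a finite group in which every non-abelian chief factor is simple (an SC-group/SNAC-group), and let D = G^𝔖 be the solvable residual with Z(D) = 1. If additionally for every minimal normal subgroup M of G contained in D the quotient G/(M·C_G(M)) is solvable, then D is a direct product of minimal normal subgroups of G, each of which is a non-abelian simple group. -/

import Mathlib

open scoped Pointwise

/-- `N` is a minimal normal subgroup of `G`. -/
def IsMinimalNormal {G : Type*} [Group G] (N : Subgroup G) : Prop :=
  N.Normal ∧ N ≠ ⊥ ∧ ∀ M : Subgroup G, M.Normal → M ≤ N → M = ⊥ ∨ M = N

/-- Every non-abelian chief factor of `G` is simple (SC-group / SNAC-group). -/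
def SCGroup (G : Type*) [Group G] : Prop :=
  ∀ (U V : Subgroup G) [U.Normal] [V.Normal], V < U →
    IsMinimalNormal (U.map (QuotientGroup.mk' V)) →
    (¬ ∀ x y : (U.map (QuotientGroup.mk' V)), x * y = y * x) →
    IsSimpleGroup (U.map (QuotientGroup.mk' V))

/-- The solvable residual `G^𝔖`: the smallest normal subgroup of `G` with
solvable quotient. -/
def solvableResidual (G : Type*) [Group G] : Subgroup G :=
  sInf {K : Subgroup G | K.Normal ∧ ∀ [inst : K.Normal], IsSolvable (G ⧸ K)}

section Aux

variable {G : Type*} [Group G]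

lemma aux_centralizer_normal (M : Subgroup G) [hM : M.Normal] :
    (Subgroup.centralizer (M : Set G)).Normal := by
  constructor
  intro x hx g
  rw [Subgroup.mem_centralizer_iff] at hx ⊢
  intro h hh
  have hh' : g⁻¹ * h * (g⁻¹)⁻¹ ∈ M := hM.conj_mem h hh g⁻¹
  have h1 := hx _ hh'
  have h2 := congrArg (fun y => g * y * g⁻¹) h1
  simpa [mul_assoc] using h2

lemma aux_residual_normal : (solvableResidual G).Normal := by
  constructor
  intro x hx g
  rw [solvableResidual, Subgroup.mem_sInf] at hx ⊢
  intro K hK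
  exact hK.1.conj_mem x (hx K hK) g

lemma aux_residual_le {K : Subgroup G} (hK : K.Normal)
    (h : ∀ [inst : K.Normal], IsSolvable (G ⧸ K)) : solvableResidual G ≤ K :=
  sInf_le ⟨hK, h⟩

lemma aux_card_lt [Finite G] {A B : Subgroup G} (h : A < B) : Nat.card A < Nat.card B := by
  have hss : (A : Set G) ⊂ (B : Set G) := by
    rw [Set.ssubset_iff_of_subset (by exact_mod_cast h.le)]
    obtain ⟨x, hxB, hxA⟩ := SetLike.exists_of_lt h
    exact ⟨x, hxB, hxA⟩
  simpa [Nat.card_coe_set_eq] using Set.Finite.card_lt_card (Set.toFinite _) hss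

lemma aux_exists_minimal [Finite G] :
    ∀ (n : ℕ) (H : Subgroup G), Nat.card H ≤ n → H.Normal → H ≠ ⊥ →
      ∃ M : Subgroup G, IsMinimalNormal M ∧ M ≤ H := by
  intro n
  induction n with
  | zero =>
    intro H hc _ _
    have := Nat.card_pos (α := H); omega
  | succ n ih =>
    intro H hc hN hne
    by_cases hmin : ∀ M : Subgroup G, M.Normal → M ≤ H → M = ⊥ ∨ M = H
    · exact ⟨H, ⟨hN, hne, hmin⟩, le_rfl⟩
    · push_neg at hmin
      obtain ⟨M, hMn, hMle, hMbot, hMH⟩ := hmin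
      have hlt : M < H := lt_of_le_of_ne hMle hMH
      have : Nat.card M ≤ n := by
        have := aux_card_lt hlt
        omega
      obtain ⟨M', hM', hM'le⟩ := ih M this hMn hMbot
      exact ⟨M', hM', hM'le.trans hMle⟩

/-- A non-abelian minimal normal subgroup of an SC-group is simple. -/
lemma aux_simple_of_minimal [Finite G] (hSC : SCGroup G) {M : Subgroup G}
    (hmin : IsMinimalNormal M) (hnab : ¬ ∀ x y : M, x * y = y * x) :
    IsSimpleGroup M := by
  obtain ⟨hMn, hMne, hMm⟩ := hmin
  haveI := hMn
  set f : G →* G ⧸ (⊥ : Subgroup G) := QuotientGroup.mk' ⊥ with hf_def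
  have hker : f.ker = ⊥ := QuotientGroup.ker_mk' ⊥
  have hf : Function.Injective f := by
    rw [← MonoidHom.ker_eq_bot_iff]; exact hker
  have hfs : Function.Surjective f := QuotientGroup.mk'_surjective ⊥
  have hlt : (⊥ : Subgroup G) < M := bot_lt_iff_ne_bot.mpr hMne
  have hmap_min : IsMinimalNormal (M.map f) := by
    refine ⟨hMn.map f hfs, ?_, ?_⟩
    · intro hb
      have h' := congrArg (Subgroup.comap f) hb
      rw [Subgroup.comap_map_eq_self_of_injective hf, MonoidHom.comap_bot, hker] at h'
      exact hMne h'
    · intro M' hM'n hM'le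
      have hcle : M'.comap f ≤ M := by
        have := Subgroup.comap_mono (f := f) hM'le
        rwa [Subgroup.comap_map_eq_self_of_injective hf] at this
      rcases hMm (M'.comap f) (hM'n.comap f) hcle with h | h
      · left
        have := congrArg (Subgroup.map f) h
        rwa [Subgroup.map_comap_eq_self_of_surjective hfs, Subgroup.map_bot] at this
      · right
        have := congrArg (Subgroup.map f) h
        rwa [Subgroup.map_comap_eq_self_of_surjective hfs] at this
  have hmap_nab : ¬ ∀ x y : (M.map f), x * y = y * x := by
    intro hab
    apply hnab
    intro x y
    have hx : f x.1 ∈ M.map f := Subgroup.mem_map_of_mem f x.2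
    have hy : f y.1 ∈ M.map f := Subgroup.mem_map_of_mem f y.2
    have := hab ⟨f x.1, hx⟩ ⟨f y.1, hy⟩
    rw [Subtype.ext_iff] at this ⊢
    apply hf
    simpa [map_mul] using this
  haveI hsimp : IsSimpleGroup (M.map f) := hSC M ⊥ hlt hmap_min hmap_nab
  haveI : Nontrivial M := (Subgroup.nontrivial_iff_ne_bot M).mpr hMne
  let e := M.equivMapOfInjective f hf
  exact IsSimpleGroup.isSimpleGroup_of_surjective e.symm.toMonoidHom e.symm.surjective

lemma aux_disjoint_centralizer {M : Subgroup G} (hs : IsSimpleGroup M)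
    (hnab : ¬ ∀ x y : M, x * y = y * x) :
    M ⊓ Subgroup.centralizer (M : Set G) = ⊥ := by
  have hcen : Subgroup.center M = ⊥ := by
    rcases Subgroup.Normal.eq_bot_or_eq_top (inferInstance : (Subgroup.center M).Normal) with h | h
    · exact h
    · exfalso
      apply hnab
      intro x y
      have hx : x ∈ Subgroup.center M := h ▸ Subgroup.mem_top x
      exact (Subgroup.mem_center_iff.mp hx y).symm
  rw [eq_bot_iff]
  intro x hx
  obtain ⟨hxM, hxC⟩ := hx
  have : (⟨x, hxM⟩ : M) ∈ Subgroup.center M := by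
    rw [Subgroup.mem_center_iff]
    intro g
    have := Subgroup.mem_centralizer_iff.mp hxC g.1 g.2
    exact Subtype.ext this
  rw [hcen, Subgroup.mem_bot] at this
  simpa [Subgroup.mem_bot] using congrArg Subtype.val this

end Aux

section Main

variable {G : Type} [Group G] [Finite G]

lemma aux_key (hSC : SCGroup G)
    (hZ : Subgroup.center (solvableResidual G) = ⊥)
    (hsolv : ∀ M : Subgroup G, IsMinimalNormal M → M ≤ solvableResidual G →
      ∀ [inst : (M ⊔ Subgroup.centralizer (M : Set G)).Normal],
        IsSolvable (G ⧸ (M ⊔ Subgroup.centralizer (M : Set G)))) :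
    ∀ (n : ℕ) (H : Subgroup G), Nat.card H ≤ n → H.Normal → H ≤ solvableResidual G →
    ∃ (ι : Type) (_ : Fintype ι) (Nfam : ι → Subgroup G),
      (∀ i, IsMinimalNormal (Nfam i)) ∧
      (∀ i, IsSimpleGroup (Nfam i)) ∧
      (∀ i, ¬ ∀ x y : (Nfam i), x * y = y * x) ∧
      iSupIndep Nfam ∧ (⨆ i, Nfam i) = H := by
  intro n
  induction n with
  | zero =>
    intro H hc _ _
    have := Nat.card_pos (α := H); omega
  | succ n ih =>
    intro H hc hHn hHD
    by_cases hbot : H = ⊥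
    · refine ⟨Empty, inferInstance, Empty.elim, ?_, ?_, ?_, ?_, ?_⟩
      · exact fun i => i.elim
      · exact fun i => i.elim
      · exact fun i => i.elim
      · exact fun i => i.elim
      · simp [hbot]
    -- get a minimal normal subgroup M of G inside H
    obtain ⟨M, hMmin, hMH⟩ := aux_exists_minimal (Nat.card H) H le_rfl hHn hbot
    have hMD : M ≤ solvableResidual G := hMH.trans hHD
    obtain ⟨hMn, hMne, hMm⟩ := hMmin
    haveI := hMn
    haveI hCn : (Subgroup.centralizer (M : Set G)).Normal := aux_centralizer_normal M
    set C := Subgroup.centralizer (M : Set G) with hC_def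
    -- M is non-abelian
    have hnab : ¬ ∀ x y : M, x * y = y * x := by
      intro hab
      -- M ≤ C, so M ⊔ C = C, so D ≤ C, so M ≤ Z(D)
      have hMC : M ≤ C := by
        intro x hx
        rw [hC_def, Subgroup.mem_centralizer_iff]
        intro h hh
        have := hab ⟨h, hh⟩ ⟨x, hx⟩
        exact congrArg Subtype.val this
      have hsup : M ⊔ C = C := sup_eq_right.mpr hMC
      have hDC : solvableResidual G ≤ C := by
        have h1 : (M ⊔ C).Normal := Subgroup.sup_normal M C
        have h2 := aux_residual_le (K := M ⊔ C) h1 (hsolv M ⟨hMn, hMne, hMm⟩ hMD)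
        rwa [hsup] at h2
      obtain ⟨m, hm⟩ := Subgroup.ne_bot_iff_exists_ne_one.mp hMne
      have hmD : (m : G) ∈ solvableResidual G := hMD m.2
      have hmem : (⟨m, hmD⟩ : solvableResidual G) ∈ Subgroup.center (solvableResidual G) := by
        rw [Subgroup.mem_center_iff]
        intro g
        have hgC : (g : G) ∈ C := hDC g.2
        have := Subgroup.mem_centralizer_iff.mp hgC m m.2
        exact Subtype.ext this.symm
      rw [hZ, Subgroup.mem_bot] at hmem
      apply hm
      exact Subtype.ext (by simpa using congrArg Subtype.val hmem)
    have hsimple : IsSimpleGroup M := aux_simple_of_minimal hSC ⟨hMn, hMne, hMm⟩ hnab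
    have hMCbot : M ⊓ C = ⊥ := aux_disjoint_centralizer hsimple hnab
    -- D ≤ M ⊔ C
    have hDMC : solvableResidual G ≤ M ⊔ C := by
      haveI h1 : (M ⊔ C).Normal := Subgroup.sup_normal M C
      exact aux_residual_le h1 (hsolv M ⟨hMn, hMne, hMm⟩ hMD)
    set H₁ := C ⊓ H with hH₁_def
    haveI hH₁n : H₁.Normal := Subgroup.normal_inf_normal C H
    have hH₁H : H₁ ≤ H := inf_le_right
    have hH₁C : H₁ ≤ C := inf_le_left
    -- H = M ⊔ H₁
    have hdec : H = M ⊔ H₁ := by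
      apply le_antisymm
      · intro x hx
        have hxMC : x ∈ M ⊔ C := hDMC (hHD hx)
        have : x ∈ ((M : Set G) * (C : Set G)) := by
          rw [← Subgroup.normal_mul]; exact hxMC
        obtain ⟨m, hm, c, hcC, hmc⟩ := this
        have hcH : c ∈ H := by
          have hmH : m ∈ H := hMH hm
          have : m⁻¹ * x ∈ H := H.mul_mem (H.inv_mem hmH) hx
          rwa [← hmc, inv_mul_cancel_left] at this
        have hcH₁ : c ∈ H₁ := ⟨hcC, hcH⟩
        rw [← hmc]
        exact Subgroup.mul_mem_sup hm hcH₁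
      · exact sup_le hMH hH₁H
    have hMH₁bot : M ⊓ H₁ = ⊥ := by
      rw [eq_bot_iff, ← hMCbot]
      exact inf_le_inf_left M hH₁C
    -- H₁ is strictly smaller
    have hlt : H₁ < H := by
      rcases lt_or_eq_of_le hH₁H with h | h
      · exact h
      · exfalso
        apply hMne
        rw [eq_bot_iff, ← hMH₁bot]
        exact le_inf le_rfl (h ▸ hMH)
    have hcard : Nat.card H₁ ≤ n := by
      have := aux_card_lt hlt
      omega
    obtain ⟨ι, hι, Nfam, h1, h2, h3, h4, h5⟩ := ih H₁ hcard hH₁n (hH₁H.trans hHD)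
    -- extend the family with M
    refine ⟨Option ι, inferInstance, fun o => o.elim M Nfam, ?_, ?_, ?_, ?_, ?_⟩
    · rintro (_ | i)
      · exact ⟨hMn, hMne, hMm⟩
      · exact h1 i
    · rintro (_ | i)
      · exact hsimple
      · exact h2 i
    · rintro (_ | i)
      · exact hnab
      · exact h3 i
    · -- independence
      intro o
      rw [disjoint_iff]
      cases o with
      | none =>
        have hrest : (⨆ (j : Option ι) (_ : j ≠ none), (j.elim M Nfam : Subgroup G)) =
            ⨆ i, Nfam i := by
          apply le_antisymm
          · refine iSup_le fun j => iSup_le fun hj => ?_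
            cases j with
            | none => exact absurd rfl hj
            | some k => exact le_iSup Nfam k
          · refine iSup_le fun k => ?_
            exact le_iSup_of_le (Option.some k)
              (le_iSup_of_le (fun h => nomatch h) le_rfl)
        rw [hrest, h5]
        simpa using hMH₁bot
      | some i =>
        have hrest : (⨆ (j : Option ι) (_ : j ≠ some i), (j.elim M Nfam : Subgroup G)) =
            M ⊔ ⨆ (j : ι) (_ : j ≠ i), Nfam j := by
          apply le_antisymm
          · refine iSup_le fun j => iSup_le fun hj => ?_
            cases j with
            | none => exact le_sup_left
            | some k =>
                have hk : k ≠ i := fun h => hj (by rw [h])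
                exact le_sup_of_le_right (le_iSup_of_le k (le_iSup_of_le hk le_rfl))
          · refine sup_le
              (le_iSup_of_le Option.none
                (le_iSup_of_le (fun h => nomatch h) le_rfl)) ?_
            refine iSup_le fun j => iSup_le fun hj => ?_
            exact le_iSup_of_le (Option.some j)
              (le_iSup_of_le (fun h => hj (Option.some.inj h)) le_rfl)
        rw [hrest]
        set K := ⨆ (j : ι) (_ : j ≠ i), Nfam j with hK_def
        have hKH₁ : K ≤ H₁ := by
          rw [← h5]
          apply iSup_le; intro j; apply iSup_le; intro _
          exact le_iSup Nfam j
        rw [eq_bot_iff]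
        intro x hx
        obtain ⟨hxN, hxMK⟩ := hx
        have hxH₁ : x ∈ H₁ := by rw [← h5]; exact le_iSup Nfam i hxN
        have : x ∈ ((M : Set G) * (K : Set G)) := by
          rw [← Subgroup.normal_mul]; exact hxMK
        obtain ⟨m, hm, k, hk, hmk⟩ := this
        have hkH₁ : k ∈ H₁ := hKH₁ hk
        have hmH₁ : m ∈ H₁ := by
          have : x * k⁻¹ ∈ H₁ := H₁.mul_mem hxH₁ (H₁.inv_mem hkH₁)
          rwa [← hmk, mul_inv_cancel_right] at this
        have hm1 : m = 1 := by
          have : m ∈ M ⊓ H₁ := ⟨hm, hmH₁⟩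
          rwa [hMH₁bot, Subgroup.mem_bot] at this
        have hxk : x = k := by simpa [hm1] using hmk.symm
        have hxbot := (h4 i).le_bot (⟨hxN, hxk ▸ hk⟩ : x ∈ Nfam i ⊓ K)
        rwa [Subgroup.mem_bot] at hxbot
    · rw [iSup_option_elim, h5, hdec]

end Main

/-- Let `G` be a finite SC-group with solvable residual `D = G^𝔖` satisfying
`Z(D) = 1`.  If `G/(M·C_G(M))` is solvable for every minimal normal subgroup
`M ≤ D` of `G`, then `D` is a direct product of minimal normal subgroups of
`G`, each a non-abelian simple group. -/
theorem stmt13 {G : Type} [Group G] [Finite G] (hSC : SCGroup G)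
    (hZ : Subgroup.center (solvableResidual G) = ⊥)
    (hsolv : ∀ M : Subgroup G, IsMinimalNormal M → M ≤ solvableResidual G →
      ∀ [inst : (M ⊔ Subgroup.centralizer (M : Set G)).Normal],
        IsSolvable (G ⧸ (M ⊔ Subgroup.centralizer (M : Set G)))) :
    ∃ (ι : Type) (_ : Fintype ι) (Nfam : ι → Subgroup G),
      (∀ i, IsMinimalNormal (Nfam i)) ∧
      (∀ i, IsSimpleGroup (Nfam i)) ∧
      (∀ i, ¬ ∀ x y : (Nfam i), x * y = y * x) ∧
      iSupIndep Nfam ∧ (⨆ i, Nfam i) = solvableResidual G :=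
  aux_key hSC hZ hsolv (Nat.card (solvableResidual G)) (solvableResidual G) le_rfl
    aux_residual_normal le_rfl
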